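/- arXiv:2303.07613 — 4 statements merged into one kernel-verified Lean document; each statement's English description precedes it below -/
import Mathlib

section
/- Let k ≥ 2 be an integer. For every ε > 0 there exists a constant C > 0 such that for every positive integer n, the number R_{k,2}(n) of ordered pairs of positive integers (a,b) with a^k + b^k = n satisfies R_{k,2}(n) ≤ C · n^ε. -/
open Finset in
lemma divisor_bound (ε : ℝ) (hε : 0 < ε) :
    ∃ C : ℝ, 1 ≤ C ∧ ∀ n : ℕ, 0 < n → ((n.divisors.card : ℝ)) ≤ C * (n : ℝ) ^ ε := by
  set t : ℝ := ε * Real.log 2 with ht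
  have ht0 : 0 < t := mul_pos hε (Real.log_pos one_lt_two)
  set M : ℝ := 1 + 1 / t with hM
  have hM1 : 1 ≤ M := le_add_of_nonneg_right (by positivity)
  -- key: ∀ e : ℕ, (e+1 : ℝ) ≤ M * 2 ^ (ε * e)
  have key : ∀ e : ℕ, (e + 1 : ℝ) ≤ M * (2 : ℝ) ^ (ε * e) := by
    intro e
    have h2 : (2 : ℝ) ^ (ε * e) = Real.exp (t * e) := by
      rw [← Real.exp_log (by norm_num : (0:ℝ) < 2), ← Real.exp_mul]
      rw [ht]; ring_nf
    rw [h2]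
    have hexp1 : 1 ≤ Real.exp (t * e) := Real.one_le_exp (by positivity)
    have hxe : (t * e) ≤ Real.exp (t * e) := by
      have := Real.add_one_le_exp (t * e); nlinarith [mul_nonneg ht0.le (Nat.cast_nonneg e)]
    have he : (e : ℝ) ≤ Real.exp (t * e) / t := by
      rw [le_div_iff₀ ht0]; nlinarith
    calc (e + 1 : ℝ) ≤ Real.exp (t * e) / t + Real.exp (t * e) := by
          have := hexp1; linarith
      _ = M * Real.exp (t * e) := by rw [hM]; ring
  set K : ℕ := ⌈(2 : ℝ) ^ (1 / ε)⌉₊ with hK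
  refine ⟨M ^ (K + 1), one_le_pow₀ hM1, ?_⟩
  intro n hn
  have hn0 : n ≠ 0 := hn.ne'
  rw [Nat.card_divisors hn0]
  push_cast
  -- pointwise bound
  have hpt : ∀ p ∈ n.primeFactors,
      ((n.factorization p + 1 : ℕ) : ℝ) ≤
        (if p ≤ K then M else 1) * (p : ℝ) ^ (ε * (n.factorization p)) := by
    intro p hp
    have hpp : p.Prime := Nat.prime_of_mem_primeFactors hp
    have hp2 : (2 : ℝ) ≤ (p : ℝ) := by exact_mod_cast hpp.two_le
    set e := n.factorization p
    by_cases hpK : p ≤ K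
    · simp only [hpK, if_true]
      have : (2 : ℝ) ^ (ε * e) ≤ (p : ℝ) ^ (ε * e) :=
        Real.rpow_le_rpow (by norm_num) hp2 (by positivity)
      calc ((e + 1 : ℕ) : ℝ) ≤ M * (2:ℝ) ^ (ε * e) := by push_cast; exact key e
        _ ≤ M * (p:ℝ) ^ (ε * e) := by
            exact mul_le_mul_of_nonneg_left this (by linarith)
    · simp only [hpK, if_false, one_mul]
      -- p > K so p ≥ 2^(1/ε), so p^ε ≥ 2, so (e+1) ≤ 2^e ≤ p^(εe)
      have hpK' : ((2:ℝ) ^ (1/ε)) ≤ (p : ℝ) := by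
        have : (K : ℝ) < (p : ℝ) := by exact_mod_cast Nat.lt_of_not_le hpK
        calc (2:ℝ) ^ (1/ε) ≤ (K : ℝ) := Nat.le_ceil _
          _ ≤ (p:ℝ) := this.le
      have h2p : (2 : ℝ) ≤ (p:ℝ) ^ ε := by
        have := Real.rpow_le_rpow (by positivity) hpK' hε.le
        rwa [← Real.rpow_mul (by norm_num), one_div_mul_cancel hε.ne', Real.rpow_one] at this
      have h1 : ((e + 1 : ℕ) : ℝ) ≤ (2:ℝ) ^ (e : ℕ) := by
        exact_mod_cast Nat.lt_two_pow_self (n := e)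
      have h2 : (2:ℝ) ^ (e:ℕ) ≤ ((p:ℝ) ^ ε) ^ (e:ℕ) :=
        pow_le_pow_left₀ (by norm_num) h2p e
      have h3 : ((p:ℝ) ^ ε) ^ (e:ℕ) = (p:ℝ) ^ (ε * e) := by
        rw [← Real.rpow_natCast ((p:ℝ) ^ ε) e, ← Real.rpow_mul (by positivity)]
      linarith [h1, h2, h3.le, h3.ge]
  -- now combine
  calc (∏ p ∈ n.primeFactors, ((n.factorization p : ℝ) + 1))
      ≤ ∏ p ∈ n.primeFactors,
          (if p ≤ K then M else 1) * (p : ℝ) ^ (ε * (n.factorization p)) := by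
        apply Finset.prod_le_prod
        · intro p _; positivity
        · intro p hp
          have := hpt p hp; push_cast at this ⊢; exact this
    _ = (∏ p ∈ n.primeFactors, (if p ≤ K then M else 1)) *
          ∏ p ∈ n.primeFactors, (p : ℝ) ^ (ε * (n.factorization p)) :=
        Finset.prod_mul_distrib
    _ ≤ M ^ (K + 1) * (n : ℝ) ^ ε := by
        have hA : (∏ p ∈ n.primeFactors, (if p ≤ K then M else 1)) ≤ M ^ (K + 1) := by
          rw [← Finset.prod_filter_mul_prod_filter_not n.primeFactors (· ≤ K)]
          have h2 : ∏ p ∈ n.primeFactors.filter (¬ · ≤ K), (if p ≤ K then M else 1) = 1 := by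
            apply Finset.prod_eq_one
            intro p hp
            simp only [Finset.mem_filter] at hp
            simp [hp.2]
          rw [h2, mul_one]
          have h3 : ∏ p ∈ n.primeFactors.filter (· ≤ K), (if p ≤ K then M else 1)
              ≤ M ^ (n.primeFactors.filter (· ≤ K)).card := by
            rw [← Finset.prod_const]
            apply Finset.prod_le_prod
            · intro p hp; split <;> [linarith; norm_num]
            · intro p hp
              simp only [Finset.mem_filter] at hp
              simp [hp.2]
          refine h3.trans (pow_le_pow_right₀ hM1 ?_)
          have : n.primeFactors.filter (· ≤ K) ⊆ Finset.range (K + 1) := by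
            intro p hp
            simp only [Finset.mem_filter] at hp
            simp [Nat.lt_succ_of_le hp.2]
          simpa using Finset.card_le_card this
        have hB : (∏ p ∈ n.primeFactors, (p : ℝ) ^ (ε * (n.factorization p))) = (n : ℝ) ^ ε := by
          have hnn : ∀ p ∈ n.primeFactors, (0:ℝ) ≤ (p:ℝ) ^ (n.factorization p : ℕ) := by
            intro p _; positivity
          have : ∏ p ∈ n.primeFactors, (p : ℝ) ^ (ε * (n.factorization p))
              = (∏ p ∈ n.primeFactors, (p:ℝ) ^ (n.factorization p : ℕ)) ^ ε := by
            rw [← Real.finset_prod_rpow _ _ hnn]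
            apply Finset.prod_congr rfl
            intro p _
            rw [← Real.rpow_natCast (p:ℝ) (n.factorization p), ← Real.rpow_mul (by positivity),
              mul_comm]
          rw [this]
          have hfact : (∏ p ∈ n.primeFactors, p ^ (n.factorization p)) = n := by
            have := Nat.factorization_prod_pow_eq_self hn0
            rwa [Finsupp.prod, Nat.support_factorization] at this
          have : (∏ p ∈ n.primeFactors, (p:ℝ) ^ (n.factorization p : ℕ)) = (n:ℝ) := by
            exact_mod_cast congrArg (Nat.cast : ℕ → ℝ) hfact
          rw [this]
        rw [hB]
        exact mul_le_mul_of_nonneg_right hA (by positivity)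

open Finset

def sols (k n : ℕ) : Finset (ℕ × ℕ) :=
  ((range (n+1)) ×ˢ (range (n+1))).filter fun p => 0 < p.1 ∧ 0 < p.2 ∧ p.1 ^ k + p.2 ^ k = n

lemma mem_sols {k n : ℕ} (hk : 1 ≤ k) (p : ℕ × ℕ) :
    p ∈ sols k n ↔ 0 < p.1 ∧ 0 < p.2 ∧ p.1 ^ k + p.2 ^ k = n := by
  simp only [sols, mem_filter, mem_product, mem_range]
  constructor
  · tauto
  · rintro ⟨h1, h2, h3⟩
    have f1 : p.1 ^ k ≤ n := by omega
    have f2 : p.2 ^ k ≤ n := by omega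
    have e1 : p.1 ≤ n := le_trans (Nat.le_self_pow (by omega) _) f1
    have e2 : p.2 ≤ n := le_trans (Nat.le_self_pow (by omega) _) f2
    exact ⟨⟨by omega, by omega⟩, h1, h2, h3⟩

lemma keyMono {k : ℕ} (hk : 2 ≤ k) {a b a' b' : ℕ} (hsum : a + b = a' + b')
    (hlt : a < a') (hmid : 2 * a' ≤ a + b) : a' ^ k + b' ^ k < a ^ k + b ^ k := by
  have hb' : a' ≤ b' := by omega
  have hbb : b' < b := by omega
  -- cast to ℤ
  zify
  have hA0 : (0:ℤ) ≤ (a:ℤ) := Int.natCast_nonneg a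
  have hAA' : (a:ℤ) < (a':ℤ) := by exact_mod_cast hlt
  have hA'B' : (a':ℤ) ≤ (b':ℤ) := by exact_mod_cast hb'
  have hB'B : (b':ℤ) < (b:ℤ) := by exact_mod_cast hbb
  have hsumZ : (a:ℤ) + (b:ℤ) = (a':ℤ) + (b':ℤ) := by exact_mod_cast hsum
  have hSlt : (∑ i ∈ range k, (a':ℤ) ^ i * (a:ℤ) ^ (k - 1 - i)) <
      (∑ i ∈ range k, (b:ℤ) ^ i * (b':ℤ) ^ (k - 1 - i)) := by
    apply Finset.sum_lt_sum
    · intro i hi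
      apply mul_le_mul
      · exact pow_le_pow_left₀ (by linarith) (by linarith) i
      · exact pow_le_pow_left₀ hA0 (by linarith) _
      · positivity
      · positivity
    · refine ⟨0, Finset.mem_range.mpr (by omega), ?_⟩
      simp only [pow_zero, one_mul, Nat.sub_zero]
      exact pow_lt_pow_left₀ (by linarith) hA0 (by omega)
  have hgeom1 : (∑ i ∈ range k, (b:ℤ) ^ i * (b':ℤ) ^ (k - 1 - i)) * ((b:ℤ) - (b':ℤ)) = (b:ℤ) ^ k - (b':ℤ) ^ k :=
    geom_sum₂_mul (b:ℤ) (b':ℤ) k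
  have hgeom2 : (∑ i ∈ range k, (a':ℤ) ^ i * (a:ℤ) ^ (k - 1 - i)) * ((a':ℤ) - (a:ℤ)) = (a':ℤ) ^ k - (a:ℤ) ^ k :=
    geom_sum₂_mul (a':ℤ) (a:ℤ) k
  have hdiff : (b:ℤ) - (b':ℤ) = (a':ℤ) - (a:ℤ) := by linarith
  have hpos : (0:ℤ) < (a':ℤ) - (a:ℤ) := by linarith
  have hS1nonneg : 0 ≤ (∑ i ∈ range k, (a':ℤ) ^ i * (a:ℤ) ^ (k - 1 - i)) := by
    apply Finset.sum_nonneg; intro i _; positivity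
  nlinarith [hSlt, hgeom1, hgeom2]

lemma eq_of_keyMono {k : ℕ} (hk : 2 ≤ k) {a b c d : ℕ} (h : a + b = c + d)
    (h2 : 2 * a ≤ a + b) (h3 : 2 * c ≤ c + d) (hv : a ^ k + b ^ k = c ^ k + d ^ k) :
    a = c := by
  rcases lt_trichotomy a c with h' | h' | h'
  · have := keyMono hk h h' (h ▸ h3); omega
  · exact h'
  · have := keyMono hk h.symm h' (h.symm ▸ h2); omega

lemma sols_odd_card {k n : ℕ} (hk : 3 ≤ k) (hodd : Odd k) (hn : 0 < n) :
    (sols k n).card ≤ 2 * n.divisors.card := by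
  have h2 : (2 * n.divisors.card) = (n.divisors ×ˢ ({0, 1} : Finset ℕ)).card := by
    rw [Finset.card_product]; simp [mul_comm]
  rw [h2]
  apply Finset.card_le_card_of_injOn
    (fun p => (p.1 + p.2, if 2 * p.1 ≤ p.1 + p.2 then 0 else 1))
  · intro p hp
    rw [Finset.mem_coe, mem_sols (by omega)] at hp
    obtain ⟨h1, h2', h3⟩ := hp
    simp only [Finset.mem_coe, Finset.mem_product, Nat.mem_divisors]
    refine ⟨⟨?_, by omega⟩, ?_⟩
    · rw [← h3]; exact Odd.nat_add_dvd_pow_add_pow _ _ hodd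
    · split <;> simp
  · intro p hp q hq hfq
    simp only [Finset.coe_filter, Set.mem_setOf_eq, Prod.mk.injEq] at hfq
    rw [Finset.mem_coe, mem_sols (by omega)] at hp hq
    obtain ⟨hp1, hp2, hp3⟩ := hp
    obtain ⟨hq1, hq2, hq3⟩ := hq
    obtain ⟨hs, hflag⟩ := hfq
    by_cases hc1 : 2 * p.1 ≤ p.1 + p.2
    · have hc2 : 2 * q.1 ≤ q.1 + q.2 := by
        by_contra hcon
        simp [hc1, hcon] at hflag
      have := eq_of_keyMono (k := k) (by omega) hs hc1 hc2 (by rw [hp3, hq3])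
      have : p.2 = q.2 := by omega
      exact Prod.ext (by omega) this
    · have hc2 : ¬ (2 * q.1 ≤ q.1 + q.2) := by
        by_contra hcon
        simp [hc1, hcon] at hflag
      -- use second coordinates
      have hs' : p.2 + p.1 = q.2 + q.1 := by omega
      have := eq_of_keyMono (k := k) (by omega) hs' (by omega) (by omega)
        (by rw [add_comm (p.2^k), add_comm (q.2^k), hp3, hq3])
      exact Prod.ext (by omega) this

lemma sols_card_le_of_dvd {j k n : ℕ} (hj : 0 < j) (hjk : j ∣ k) (hk : 0 < k) :
    (sols k n).card ≤ (sols j n).card := by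
  have hd : 0 < k / j := Nat.div_pos (Nat.le_of_dvd hk hjk) hj
  apply Finset.card_le_card_of_injOn (fun p => (p.1 ^ (k / j), p.2 ^ (k / j)))
  · intro p hp
    rw [Finset.mem_coe, mem_sols (by omega)] at hp
    rw [Finset.mem_coe, mem_sols (by omega)]
    refine ⟨pow_pos hp.1 _, pow_pos hp.2.1 _, ?_⟩
    rw [← pow_mul, ← pow_mul, Nat.div_mul_cancel hjk]
    exact hp.2.2
  · intro p _ q _ hfq
    simp only [Prod.mk.injEq] at hfq
    have hinj := Nat.pow_left_injective hd.ne'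
    exact Prod.ext (hinj hfq.1) (hinj hfq.2)

-- number of square roots of 1 in ZMod m
lemma Ycard (m : ℕ) [NeZero m] :
    (univ.filter fun y : ZMod m => y ^ 2 = 1).card ≤ 3 * m.divisors.card ^ 2 := by
  have hm0 : 0 < m := Nat.pos_of_ne_zero (NeZero.ne m)
  rcases eq_or_lt_of_le (Nat.succ_le_of_lt hm0) with hm1 | hm2
  · -- m = 1
    have : m = 1 := hm1.symm
    subst this
    have : (univ.filter fun y : ZMod 1 => y ^ 2 = 1).card ≤ Fintype.card (ZMod 1) :=
      (Finset.card_filter_le _ _).trans (by simp)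
    simpa using this.trans (by norm_num)
  · -- m ≥ 2
    haveI : Fact (1 < m) := ⟨hm2⟩
    haveI : Nontrivial (ZMod m) := ZMod.nontrivial m
    set s := (univ.filter fun y : ZMod m => y ^ 2 = 1) with hs
    -- facts about elements of s
    have hfacts : ∀ y ∈ s, 1 ≤ y.val ∧ m ∣ (y.val - 1) * (y.val + 1) := by
      intro y hy
      simp only [hs, mem_filter, mem_univ, true_and] at hy
      have hyne : y ≠ 0 := by
        intro h; rw [h] at hy; simp at hy
      have hv1 : 1 ≤ y.val := by
        rcases Nat.eq_zero_or_pos y.val with h | h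
        · exact absurd ((ZMod.val_eq_zero y).mp h) hyne
        · exact h
      refine ⟨hv1, ?_⟩
      have hy' : ((y.val : ℕ) : ZMod m) ^ 2 = ((1 : ℕ) : ZMod m) := by
        rw [ZMod.natCast_rightInverse y]; simpa using hy
      have hmod : (y.val ^ 2) ≡ 1 [MOD m] := by
        rw [← Nat.cast_pow] at hy'
        exact (ZMod.natCast_eq_natCast_iff _ _ _).mp hy'
      have hdvd : m ∣ y.val ^ 2 - 1 := (Nat.modEq_iff_dvd' (by nlinarith)).mp hmod.symm
      have hid : (y.val - 1) * (y.val + 1) = y.val ^ 2 - 1 := by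
        have h1 : 1 ≤ y.val ^ 2 := Nat.one_le_pow _ _ hv1
        zify [hv1, h1]
        ring
      rwa [hid]
    set f : ZMod m → ℕ × ℕ := fun y => (Nat.gcd m (y.val - 1), Nat.gcd m (y.val + 1)) with hf
    calc s.card ≤ 3 * (s.image f).card := by
          apply Finset.card_le_mul_card_image
          intro v hv
          obtain ⟨y0, hy0s, hy0⟩ := Finset.mem_image.mp hv
          obtain ⟨d1, d2⟩ := v
          have hd1 : d1 = Nat.gcd m (y0.val - 1) := by
            have := hy0; simp only [hf, Prod.mk.injEq] at this; exact this.1.symm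
          have hd2 : d2 = Nat.gcd m (y0.val + 1) := by
            have := hy0; simp only [hf, Prod.mk.injEq] at this; exact this.2.symm
          -- properties of d1, d2
          obtain ⟨hv01, hm01⟩ := hfacts y0 hy0s
          have hd1m : d1 ∣ m := hd1 ▸ Nat.gcd_dvd_left _ _
          have hd2m : d2 ∣ m := hd2 ▸ Nat.gcd_dvd_left _ _
          have hd1v0 : d1 ∣ y0.val - 1 := hd1 ▸ Nat.gcd_dvd_right _ _
          have hd2v0 : d2 ∣ y0.val + 1 := hd2 ▸ Nat.gcd_dvd_right _ _
          have hd1pos : 0 < d1 := hd1 ▸ Nat.gcd_pos_of_pos_left _ hm0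
          have hd2pos : 0 < d2 := hd2 ▸ Nat.gcd_pos_of_pos_left _ hm0
          -- m ∣ d1 * d2
          have hmd : m ∣ d1 * d2 := by
            rw [hd1, hd2]
            set v0 := y0.val
            have e1 : Nat.gcd m (v0-1) * Nat.gcd m (v0+1)
                = Nat.gcd (Nat.gcd m (v0-1) * m) (Nat.gcd m (v0-1) * (v0+1)) :=
              (Nat.gcd_mul_left _ _ _).symm
            have e2 : Nat.gcd m (v0-1) * m = Nat.gcd (m*m) ((v0-1)*m) :=
              (Nat.gcd_mul_right _ _ _).symm
            have e3 : Nat.gcd m (v0-1) * (v0+1) = Nat.gcd (m*(v0+1)) ((v0-1)*(v0+1)) :=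
              (Nat.gcd_mul_right _ _ _).symm
            rw [e1, e2, e3]
            exact Nat.dvd_gcd (Nat.dvd_gcd ⟨m, rfl⟩ ⟨v0-1, by ring⟩)
              (Nat.dvd_gcd ⟨v0+1, rfl⟩ hm01)
          have hgcd2 : Nat.gcd d1 d2 ∣ 2 := by
            have h1 : Nat.gcd d1 d2 ∣ y0.val - 1 := (Nat.gcd_dvd_left d1 d2).trans hd1v0
            have h2 : Nat.gcd d1 d2 ∣ y0.val + 1 := (Nat.gcd_dvd_right d1 d2).trans hd2v0
            have := Nat.dvd_sub h2 h1
            have he : y0.val + 1 - (y0.val - 1) = 2 := by omega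
            rwa [he] at this
          set L := Nat.lcm d1 d2 with hL
          have hLpos : 0 < L := Nat.lcm_pos hd1pos hd2pos
          have hm2L : m ≤ 2 * L := by
            have h1 : m ≤ d1 * d2 := Nat.le_of_dvd (by positivity) hmd
            have h2 : Nat.gcd d1 d2 * L = d1 * d2 := Nat.gcd_mul_lcm d1 d2
            have h3 : Nat.gcd d1 d2 ≤ 2 := Nat.le_of_dvd (by norm_num) hgcd2
            nlinarith
          -- every y in the fiber has val ≡ y0.val mod L
          have key : ∀ y ∈ s.filter (fun x => f x = (d1, d2)),
              y = y0 ∨ y = ((y0.val + L : ℕ) : ZMod m) ∨ y = ((y0.val - L : ℕ) : ZMod m) := by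
            intro y hy
            obtain ⟨hys, hyf⟩ := Finset.mem_filter.mp hy
            obtain ⟨hv1, _⟩ := hfacts y hys
            simp only [hf, Prod.mk.injEq] at hyf
            have hd1v : d1 ∣ y.val - 1 := hyf.1 ▸ Nat.gcd_dvd_right _ _
            have hd2v : d2 ∣ y.val + 1 := hyf.2 ▸ Nat.gcd_dvd_right _ _
            have hvm : y.val < m := ZMod.val_lt y
            have hv0m : y0.val < m := ZMod.val_lt y0
            have hcast : ((y.val : ℕ) : ZMod m) = y := ZMod.natCast_rightInverse y
            have hcast0 : ((y0.val : ℕ) : ZMod m) = y0 := ZMod.natCast_rightInverse y0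
            rcases le_total y0.val y.val with hle | hle
            · have hLd : L ∣ y.val - y0.val := by
                apply Nat.lcm_dvd
                · have := Nat.dvd_sub hd1v hd1v0
                  have he : y.val - 1 - (y0.val - 1) = y.val - y0.val := by omega
                  rwa [he] at this
                · have := Nat.dvd_sub hd2v hd2v0
                  have he : y.val + 1 - (y0.val + 1) = y.val - y0.val := by omega
                  rwa [he] at this
              obtain ⟨q, hq⟩ := hLd
              have h5 : L * q < 2 * L := by
                rw [← hq]; exact lt_of_lt_of_le (by omega) hm2L
              have hq1 : q ≤ 1 := by
                by_contra hcon
                push_neg at hcon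
                have h6 : L * 2 ≤ L * q := Nat.mul_le_mul_left L hcon
                rw [show 2 * L = L * 2 from mul_comm 2 L] at h5
                exact absurd h5 (not_lt.mpr h6)
              interval_cases q
              · left; rw [← hcast, ← hcast0]; congr 1; omega
              · right; left; rw [← hcast]; congr 1; omega
            · have hLd : L ∣ y0.val - y.val := by
                apply Nat.lcm_dvd
                · have := Nat.dvd_sub hd1v0 hd1v
                  have he : y0.val - 1 - (y.val - 1) = y0.val - y.val := by omega
                  rwa [he] at this
                · have := Nat.dvd_sub hd2v0 hd2v
                  have he : y0.val + 1 - (y.val + 1) = y0.val - y.val := by omega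
                  rwa [he] at this
              obtain ⟨q, hq⟩ := hLd
              have h5 : L * q < 2 * L := by
                rw [← hq]; exact lt_of_lt_of_le (by omega) hm2L
              have hq1 : q ≤ 1 := by
                by_contra hcon
                push_neg at hcon
                have h6 : L * 2 ≤ L * q := Nat.mul_le_mul_left L hcon
                rw [show 2 * L = L * 2 from mul_comm 2 L] at h5
                exact absurd h5 (not_lt.mpr h6)
              interval_cases q
              · left; rw [← hcast, ← hcast0]; congr 1; omega
              · right; right; rw [← hcast]; congr 1; omega
          calc (s.filter (fun x => f x = (d1, d2))).card
              ≤ ({y0, ((y0.val + L : ℕ) : ZMod m), ((y0.val - L : ℕ) : ZMod m)} :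
                  Finset (ZMod m)).card := by
                apply Finset.card_le_card
                intro y hy
                rcases key y hy with h | h | h <;> simp [h]
            _ ≤ 3 := by
                apply le_trans (Finset.card_insert_le _ _)
                have := Finset.card_insert_le ((y0.val + L : ℕ) : ZMod m)
                  ({((y0.val - L : ℕ) : ZMod m)} : Finset (ZMod m))
                simp at this ⊢
                omega
      _ ≤ 3 * m.divisors.card ^ 2 := by
          have : s.image f ⊆ m.divisors ×ˢ m.divisors := by
            intro v hv
            obtain ⟨y, hys, hyv⟩ := Finset.mem_image.mp hv
            rw [← hyv]
            simp only [hf, Finset.mem_product, Nat.mem_divisors]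
            exact ⟨⟨Nat.gcd_dvd_left _ _, NeZero.ne m⟩, ⟨Nat.gcd_dvd_left _ _, NeZero.ne m⟩⟩
          have := Finset.card_le_card this
          rw [Finset.card_product] at this
          nlinarith

lemma Qcard (m : ℕ) [NeZero m] :
    (univ.filter fun z : ZMod m => z ^ 2 = -1).card ≤ 3 * m.divisors.card ^ 2 := by
  rcases Finset.eq_empty_or_nonempty (univ.filter fun z : ZMod m => z ^ 2 = -1) with h | h
  · rw [h]; positivity
  · obtain ⟨r, hr⟩ := h
    simp only [mem_filter, mem_univ, true_and] at hr
    have hr4 : r ^ 4 = 1 := by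
      have : r ^ 4 = (r ^ 2) ^ 2 := by ring
      rw [this, hr]; ring
    have key : (univ.filter fun z : ZMod m => z ^ 2 = -1).card
        = (univ.filter fun y : ZMod m => y ^ 2 = 1).card := by
      apply Finset.card_bij (fun z _ => z * r ^ 3)
      · intro z hz
        simp only [mem_filter, mem_univ, true_and] at hz ⊢
        have : (z * r ^ 3) ^ 2 = z ^ 2 * (r ^ 2) ^ 3 := by ring
        rw [this, hz, hr]; ring
      · intro z1 h1 z2 h2 heq
        calc z1 = z1 * r ^ 4 := by rw [hr4, mul_one]
          _ = (z1 * r ^ 3) * r := by ring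
          _ = (z2 * r ^ 3) * r := by rw [heq]
          _ = z2 * r ^ 4 := by ring
          _ = z2 := by rw [hr4, mul_one]
      · intro y hy
        simp only [mem_filter, mem_univ, true_and] at hy
        refine ⟨y * r, ?_, ?_⟩
        · simp only [mem_filter, mem_univ, true_and]
          have : (y * r) ^ 2 = y ^ 2 * r ^ 2 := by ring
          rw [this, hy, hr]; ring
        · have : y * r * r ^ 3 = y * r ^ 4 := by ring
          rw [this, hr4, mul_one]
    rw [key]
    exact Ycard m

def psols (m : ℕ) : Finset (ℕ × ℕ) :=
  ((range (m+1)) ×ˢ (range (m+1))).filter fun p =>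
    0 < p.1 ∧ 0 < p.2 ∧ Nat.gcd p.1 p.2 = 1 ∧ p.1 ^ 2 + p.2 ^ 2 = m

lemma mem_psols {m : ℕ} (p : ℕ × ℕ) :
    p ∈ psols m ↔ 0 < p.1 ∧ 0 < p.2 ∧ Nat.gcd p.1 p.2 = 1 ∧ p.1 ^ 2 + p.2 ^ 2 = m := by
  simp only [psols, mem_filter, mem_product, mem_range]
  constructor
  · tauto
  · rintro ⟨h1, h2, h3, h4⟩
    have f1 : p.1 ^ 2 ≤ m := by omega
    have f2 : p.2 ^ 2 ≤ m := by omega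
    have e1 : p.1 ≤ m := le_trans (Nat.le_self_pow (by omega) _) f1
    have e2 : p.2 ≤ m := le_trans (Nat.le_self_pow (by omega) _) f2
    exact ⟨⟨by omega, by omega⟩, h1, h2, h3, h4⟩

lemma psols_card (m : ℕ) (hm : 0 < m) : (psols m).card ≤ 3 * m.divisors.card ^ 2 := by
  haveI : NeZero m := ⟨hm.ne'⟩
  -- coprimality facts
  have hco : ∀ p ∈ psols m, Nat.Coprime p.2 m ∧ Nat.Coprime p.1 m := by
    intro p hp
    rw [mem_psols] at hp
    obtain ⟨h1, h2, h3, h4⟩ := hp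
    constructor
    · have hc : Nat.Coprime p.2 (p.1 ^ 2) := (Nat.coprime_comm.mp h3).pow_right 2
      have h5 : Nat.Coprime p.2 (p.1 ^ 2 + p.2 * p.2) :=
        (Nat.coprime_add_mul_right_right p.2 (p.1 ^ 2) p.2).mpr hc
      rw [← pow_two p.2] at h5
      rwa [h4] at h5
    · have hc : Nat.Coprime p.1 (p.2 ^ 2) := Nat.Coprime.pow_right 2 h3
      have h5 : Nat.Coprime p.1 (p.2 ^ 2 + p.1 * p.1) :=
        (Nat.coprime_add_mul_right_right p.1 (p.2 ^ 2) p.1).mpr hc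
      rw [← pow_two p.1, add_comm] at h5
      rwa [h4] at h5
  apply le_trans ?_ (Qcard m)
  apply Finset.card_le_card_of_injOn (fun p => (p.1 : ZMod m) * (p.2 : ZMod m)⁻¹)
  · intro p hp
    obtain ⟨hco2, _⟩ := hco p hp
    rw [Finset.mem_coe, mem_psols] at hp
    obtain ⟨h1, h2, h3, h4⟩ := hp
    simp only [Finset.mem_coe, mem_filter, mem_univ, true_and]
    have hinv : (p.2 : ZMod m) * (p.2 : ZMod m)⁻¹ = 1 := ZMod.coe_mul_inv_eq_one p.2 hco2
    have hzero : ((p.1 : ZMod m)) ^ 2 + ((p.2 : ZMod m)) ^ 2 = 0 := by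
      have : ((p.1 ^ 2 + p.2 ^ 2 : ℕ) : ZMod m) = ((m : ℕ) : ZMod m) := by rw [h4]
      push_cast at this
      rwa [ZMod.natCast_self] at this
    have hsq : (p.1 : ZMod m) ^ 2 = -((p.2 : ZMod m)) ^ 2 := by linear_combination hzero
    calc ((p.1 : ZMod m) * (p.2 : ZMod m)⁻¹) ^ 2
        = (p.1 : ZMod m) ^ 2 * ((p.2 : ZMod m)⁻¹) ^ 2 := by ring
      _ = -((p.2 : ZMod m) ^ 2 * ((p.2 : ZMod m)⁻¹) ^ 2) := by rw [hsq]; ring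
      _ = -(((p.2 : ZMod m) * (p.2 : ZMod m)⁻¹) ^ 2) := by ring
      _ = -1 := by rw [hinv]; ring
  · intro p hp q hq heq
    simp only at heq
    obtain ⟨hcop2, _⟩ := hco p hp
    obtain ⟨hcoq2, _⟩ := hco q hq
    rw [Finset.mem_coe, mem_psols] at hp hq
    obtain ⟨hp1, hp2, hp3, hp4⟩ := hp
    obtain ⟨hq1, hq2, hq3, hq4⟩ := hq
    have hinvp : (p.2 : ZMod m) * (p.2 : ZMod m)⁻¹ = 1 := ZMod.coe_mul_inv_eq_one p.2 hcop2
    have hinvq : (q.2 : ZMod m) * (q.2 : ZMod m)⁻¹ = 1 := ZMod.coe_mul_inv_eq_one q.2 hcoq2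
    -- cross-multiply
    have hcross : ((p.1 * q.2 : ℕ) : ZMod m) = ((q.1 * p.2 : ℕ) : ZMod m) := by
      push_cast
      calc (p.1 : ZMod m) * q.2 = (p.1 : ZMod m) * (p.2 : ZMod m)⁻¹ * q.2 * p.2 := by
            rw [show (p.1 : ZMod m) * (p.2:ZMod m)⁻¹ * q.2 * p.2
                = (p.1:ZMod m) * ((p.2:ZMod m) * (p.2:ZMod m)⁻¹) * q.2 from by ring, hinvp]
            ring
        _ = (q.1 : ZMod m) * (q.2 : ZMod m)⁻¹ * q.2 * p.2 := by rw [heq]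
        _ = (q.1 : ZMod m) * p.2 := by
            rw [show (q.1 : ZMod m) * (q.2:ZMod m)⁻¹ * q.2 * p.2
                = (q.1:ZMod m) * ((q.2:ZMod m) * (q.2:ZMod m)⁻¹) * p.2 from by ring, hinvq]
            ring
    have hmod : (p.1 * q.2) ≡ (q.1 * p.2) [MOD m] := (ZMod.natCast_eq_natCast_iff _ _ _).mp hcross
    have hdvd : (m : ℤ) ∣ ((p.1 * q.2 : ℕ) : ℤ) - ((q.1 * p.2 : ℕ) : ℤ) :=
      Nat.ModEq.dvd hmod.symm
    -- both products < m
    have hsq1 : p.1 ^ 2 * q.2 ^ 2 < m * m := by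
      have e1 : (1:ℕ) ≤ p.2 ^ 2 := Nat.one_le_pow _ _ hp2
      have e2 : (1:ℕ) ≤ q.1 ^ 2 := Nat.one_le_pow _ _ hq1
      have f1 : p.1 ^ 2 ≤ m - 1 := by omega
      have f2 : q.2 ^ 2 ≤ m - 1 := by omega
      calc p.1 ^ 2 * q.2 ^ 2 ≤ (m - 1) * (m - 1) := Nat.mul_le_mul f1 f2
        _ < m * m := Nat.mul_lt_mul_of_lt_of_le (by omega) (by omega) (by omega)
    have hsq2 : q.1 ^ 2 * p.2 ^ 2 < m * m := by
      have e1 : (1:ℕ) ≤ q.2 ^ 2 := Nat.one_le_pow _ _ hq2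
      have e2 : (1:ℕ) ≤ p.1 ^ 2 := Nat.one_le_pow _ _ hp1
      have f1 : q.1 ^ 2 ≤ m - 1 := by omega
      have f2 : p.2 ^ 2 ≤ m - 1 := by omega
      calc q.1 ^ 2 * p.2 ^ 2 ≤ (m - 1) * (m - 1) := Nat.mul_le_mul f1 f2
        _ < m * m := Nat.mul_lt_mul_of_lt_of_le (by omega) (by omega) (by omega)
    have hb1 : p.1 * q.2 < m := by
      by_contra hcon
      push_neg at hcon
      have h7 : m * m ≤ (p.1 * q.2) * (p.1 * q.2) := Nat.mul_le_mul hcon hcon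
      have h8 : (p.1 * q.2) * (p.1 * q.2) = p.1 ^ 2 * q.2 ^ 2 := by ring
      linarith
    have hb2 : q.1 * p.2 < m := by
      by_contra hcon
      push_neg at hcon
      have h7 : m * m ≤ (q.1 * p.2) * (q.1 * p.2) := Nat.mul_le_mul hcon hcon
      have h8 : (q.1 * p.2) * (q.1 * p.2) = q.1 ^ 2 * p.2 ^ 2 := by ring
      linarith
    have heqn : p.1 * q.2 = q.1 * p.2 := by
      have hb1' : ((p.1 * q.2 : ℕ) : ℤ) < (m : ℤ) := by exact_mod_cast hb1
      have hb2' : ((q.1 * p.2 : ℕ) : ℤ) < (m : ℤ) := by exact_mod_cast hb2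
      have hpos1 : (0:ℤ) ≤ ((p.1 * q.2 : ℕ) : ℤ) := Int.natCast_nonneg _
      have hpos2 : (0:ℤ) ≤ ((q.1 * p.2 : ℕ) : ℤ) := Int.natCast_nonneg _
      have habs : |((p.1 * q.2 : ℕ) : ℤ) - ((q.1 * p.2 : ℕ) : ℤ)| < (m : ℤ) := by
        rw [abs_lt]; constructor <;> linarith
      have h0 := Int.eq_zero_of_abs_lt_dvd hdvd habs
      have h9 : ((p.1 * q.2 : ℕ) : ℤ) = ((q.1 * p.2 : ℕ) : ℤ) := by linarith
      exact_mod_cast h9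
    -- conclude p = q
    have hdvd1 : p.1 ∣ q.1 := by
      have : p.1 ∣ q.1 * p.2 := ⟨q.2, heqn.symm ▸ by ring⟩
      exact (Nat.Coprime.dvd_of_dvd_mul_right hp3 this)
    have hdvd2 : q.1 ∣ p.1 := by
      have : q.1 ∣ p.1 * q.2 := ⟨p.2, heqn ▸ by ring⟩
      exact (Nat.Coprime.dvd_of_dvd_mul_right hq3 this)
    have h11 : p.1 = q.1 := Nat.dvd_antisymm hdvd1 hdvd2
    have h22 : p.2 = q.2 := by
      have := heqn
      rw [h11] at this
      exact (Nat.eq_of_mul_eq_mul_left hq1 (by omega)).symm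
    exact Prod.ext h11 h22

lemma sols_two_card {n : ℕ} (hn : 0 < n) : (sols 2 n).card ≤ 3 * n.divisors.card ^ 3 := by
  have hsub : sols 2 n ⊆ (n.divisors.filter (fun g => g ^ 2 ∣ n)).biUnion
      (fun g => (psols (n / g ^ 2)).image (fun p => (g * p.1, g * p.2))) := by
    intro p hp
    rw [mem_sols one_le_two] at hp
    obtain ⟨h1, h2, h3⟩ := hp
    set g := Nat.gcd p.1 p.2 with hg
    have hgpos : 0 < g := Nat.gcd_pos_of_pos_left _ h1
    obtain ⟨a', ha'⟩ : g ∣ p.1 := Nat.gcd_dvd_left p.1 p.2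
    obtain ⟨b', hb'⟩ : g ∣ p.2 := Nat.gcd_dvd_right p.1 p.2
    have hn' : n = g ^ 2 * (a' ^ 2 + b' ^ 2) := by rw [← h3, ha', hb']; ring
    have hg2 : g ^ 2 ∣ n := ⟨_, hn'⟩
    have hm : n / g ^ 2 = a' ^ 2 + b' ^ 2 := by
      rw [hn']; exact Nat.mul_div_cancel_left _ (by positivity)
    apply Finset.mem_biUnion.mpr
    refine ⟨g, ?_, ?_⟩
    · simp only [Finset.mem_filter, Nat.mem_divisors]
      exact ⟨⟨dvd_trans (dvd_pow_self g two_ne_zero) hg2, hn.ne'⟩, hg2⟩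
    · apply Finset.mem_image.mpr
      refine ⟨(a', b'), ?_, by simp [← ha', ← hb']⟩
      rw [mem_psols]
      have ha'' : p.1 / g = a' := by rw [ha']; exact Nat.mul_div_cancel_left _ hgpos
      have hb'' : p.2 / g = b' := by rw [hb']; exact Nat.mul_div_cancel_left _ hgpos
      have hcop : Nat.Coprime a' b' := by
        rw [← ha'', ← hb'']; exact Nat.coprime_div_gcd_div_gcd hgpos
      have hapos : 0 < a' := by
        rcases Nat.eq_zero_or_pos a' with h | h
        · rw [h, mul_zero] at ha'; omega
        · exact h
      have hbpos : 0 < b' := by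
        rcases Nat.eq_zero_or_pos b' with h | h
        · rw [h, mul_zero] at hb'; omega
        · exact h
      exact ⟨hapos, hbpos, hcop, hm.symm⟩
  calc (sols 2 n).card
      ≤ ((n.divisors.filter (fun g => g ^ 2 ∣ n)).biUnion
          (fun g => (psols (n / g ^ 2)).image (fun p => (g * p.1, g * p.2)))).card :=
        Finset.card_le_card hsub
    _ ≤ ∑ g ∈ n.divisors.filter (fun g => g ^ 2 ∣ n),
          ((psols (n / g ^ 2)).image (fun p => (g * p.1, g * p.2))).card :=
        Finset.card_biUnion_le
    _ ≤ ∑ _g ∈ n.divisors.filter (fun g => g ^ 2 ∣ n), 3 * n.divisors.card ^ 2 := by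
        apply Finset.sum_le_sum
        intro g hg
        simp only [Finset.mem_filter, Nat.mem_divisors] at hg
        obtain ⟨⟨hgn, _⟩, hg2⟩ := hg
        have hgpos : 0 < g := by
          rcases Nat.eq_zero_or_pos g with h | h
          · rw [h] at hgn; simp at hgn; omega
          · exact h
        have hmpos : 0 < n / g ^ 2 := Nat.div_pos (Nat.le_of_dvd hn hg2) (by positivity)
        have hmdvd : n / g ^ 2 ∣ n := ⟨g ^ 2, (Nat.div_mul_cancel hg2).symm⟩
        calc ((psols (n / g ^ 2)).image (fun p => (g * p.1, g * p.2))).card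
            ≤ (psols (n / g ^ 2)).card := Finset.card_image_le
          _ ≤ 3 * (n / g ^ 2).divisors.card ^ 2 := psols_card _ hmpos
          _ ≤ 3 * n.divisors.card ^ 2 := by
              have := Finset.card_le_card (Nat.divisors_subset_of_dvd hn.ne' hmdvd)
              nlinarith
    _ ≤ n.divisors.card * (3 * n.divisors.card ^ 2) := by
        rw [Finset.sum_const, smul_eq_mul]
        have := Finset.card_filter_le n.divisors (fun g => g ^ 2 ∣ n)
        nlinarith [Nat.zero_le (3 * n.divisors.card ^ 2)]
    _ = 3 * n.divisors.card ^ 3 := by ring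

lemma natCard_eq (k n : ℕ) (hk : 1 ≤ k) :
    Nat.card {p : ℕ × ℕ // 0 < p.1 ∧ 0 < p.2 ∧ p.1 ^ k + p.2 ^ k = n} = (sols k n).card := by
  have h : ∀ p : ℕ × ℕ, (0 < p.1 ∧ 0 < p.2 ∧ p.1 ^ k + p.2 ^ k = n) ↔ p ∈ sols k n :=
    fun p => (mem_sols hk p).symm
  calc Nat.card {p : ℕ × ℕ // 0 < p.1 ∧ 0 < p.2 ∧ p.1 ^ k + p.2 ^ k = n}
      = Nat.card {p : ℕ × ℕ // p ∈ sols k n} := Nat.card_congr (Equiv.subtypeEquivRight h)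
    _ = (sols k n).card := Nat.card_eq_finsetCard _

/-- Divisor bound: for `k ≥ 2`, the number `R_{k,2}(n)` of ordered pairs of
positive integers `(a,b)` with `a^k + b^k = n` is `O_ε(n^ε)`. -/
theorem statement11 (k : ℕ) (hk : 2 ≤ k) (ε : ℝ) (hε : 0 < ε) :
    ∃ C : ℝ, 0 < C ∧ ∀ n : ℕ, 0 < n →
      (Nat.card {p : ℕ × ℕ // 0 < p.1 ∧ 0 < p.2 ∧ p.1 ^ k + p.2 ^ k = n} : ℝ) ≤
        C * (n : ℝ) ^ ε := by
  obtain ⟨C₁, hC₁, hCbound⟩ := divisor_bound (ε / 3) (by linarith)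
  have hC₁pos : (0:ℝ) < C₁ := by linarith
  refine ⟨2 * C₁ + 3 * C₁ ^ 3, by positivity, ?_⟩
  intro n hn
  rw [natCard_eq k n (by omega)]
  have hn1 : (1 : ℝ) ≤ (n : ℝ) := by exact_mod_cast hn
  have hrpow : (n : ℝ) ^ (ε / 3) ≤ (n : ℝ) ^ ε :=
    Real.rpow_le_rpow_of_exponent_le hn1 (by linarith)
  have hrpos : (0 : ℝ) ≤ (n : ℝ) ^ ε := Real.rpow_nonneg (by positivity) _
  have hd := hCbound n hn
  have hdpos : (0 : ℝ) ≤ (n.divisors.card : ℝ) := by positivity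
  set q := ordCompl[2] k with hq
  have hk0 : k ≠ 0 := by omega
  have hqdvd : q ∣ k := Nat.ordCompl_dvd k 2
  have hqodd : ¬ 2 ∣ q := Nat.not_dvd_ordCompl Nat.prime_two hk0
  have hqpos : 0 < q := Nat.ordCompl_pos 2 hk0
  by_cases hq1 : q = 1
  · -- k is a power of 2
    have h2k : 2 ∣ k := by
      have hself := Nat.ordProj_mul_ordCompl_eq_self k 2
      rw [← hq, hq1, mul_one] at hself
      have hv : k.factorization 2 ≠ 0 := by
        intro h; rw [h, pow_zero] at hself; omega
      rw [← hself]
      exact dvd_pow_self 2 hv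
    have hcard : (sols k n).card ≤ 3 * n.divisors.card ^ 3 :=
      le_trans (sols_card_le_of_dvd two_pos h2k (by omega)) (sols_two_card hn)
    have h1 : ((sols k n).card : ℝ) ≤ 3 * (n.divisors.card : ℝ) ^ 3 := by exact_mod_cast hcard
    have h2 : ((n.divisors.card : ℝ)) ^ 3 ≤ (C₁ * (n : ℝ) ^ (ε / 3)) ^ 3 :=
      pow_le_pow_left₀ hdpos hd 3
    have h3 : (C₁ * (n : ℝ) ^ (ε / 3)) ^ 3 = C₁ ^ 3 * (n : ℝ) ^ ε := by
      rw [mul_pow, ← Real.rpow_natCast ((n:ℝ) ^ (ε/3)) 3, ← Real.rpow_mul (by positivity)]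
      norm_num
    have h4 : (0:ℝ) ≤ 2 * C₁ * (n : ℝ) ^ ε := by positivity
    calc ((sols k n).card : ℝ) ≤ 3 * (C₁ ^ 3 * (n : ℝ) ^ ε) := by
          rw [← h3]; linarith
      _ ≤ (2 * C₁ + 3 * C₁ ^ 3) * (n : ℝ) ^ ε := by ring_nf; linarith [h4]
  · -- q is odd, q ≥ 3
    have hq3 : 3 ≤ q := by omega
    have hcard : (sols k n).card ≤ 2 * n.divisors.card :=
      le_trans (sols_card_le_of_dvd hqpos hqdvd (by omega))
        (sols_odd_card hq3 (Nat.odd_iff.mpr (by omega)) hn)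
    have h1 : ((sols k n).card : ℝ) ≤ 2 * (n.divisors.card : ℝ) := by exact_mod_cast hcard
    have h4 : (0:ℝ) ≤ 3 * C₁ ^ 3 * (n : ℝ) ^ ε := by positivity
    calc ((sols k n).card : ℝ) ≤ 2 * (C₁ * (n : ℝ) ^ (ε / 3)) := by linarith
      _ ≤ 2 * (C₁ * (n : ℝ) ^ ε) := by nlinarith
      _ ≤ (2 * C₁ + 3 * C₁ ^ 3) * (n : ℝ) ^ ε := by ring_nf; nlinarith [h4]
end

section
/- Let k, s, t and Q be positive integers and let 𝒜 be a subset of {1, 2, …, Q}. Let J₁ be the number of 2s-tuples (m₁,…,m_s,n₁,…,n_s) ∈ 𝒜^{2s} satisfying m₁^k + … + m_s^k = n₁^k + … + n_s^k, and let J₂ be the number of 2s-tuples (m₁,…,m_s,n₁,…,n_s) ∈ 𝒜^{2s} satisfying simultaneously m₁^j + … + m_s^j = n₁^j + … + n_s^j for every j with 1 ≤ j ≤ t − 1, together with m₁^k + … + m_s^k = n₁^k + … + n_s^k. Then J₁ ≤ s^{t−1} · Q^{t(t−1)/2} · J₂. -/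
open Finset

private lemma pair_count14 {α β : Type*} [DecidableEq α] [DecidableEq β] (T : Finset α)
    (f : α → β) :
    ((T ×ˢ T).filter fun p => f p.1 = f p.2).card
      = ∑ v ∈ T.image f, (T.filter fun m => f m = v).card ^ 2 := by
  rw [card_eq_sum_card_fiberwise (f := fun p => f p.1) (t := T.image f)
    (fun p hp => mem_image_of_mem f (mem_product.mp (mem_filter.mp hp).1).1)]
  refine sum_congr rfl fun v hv => ?_
  rw [sq, ← card_product]
  congr 1
  ext p
  simp only [mem_filter, mem_product]
  constructor
  · rintro ⟨⟨⟨h1, h2⟩, h3⟩, h4⟩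
    exact ⟨⟨h1, h4⟩, h2, h3 ▸ h4⟩
  · rintro ⟨⟨h1, h4⟩, h2, h5⟩
    exact ⟨⟨⟨h1, h2⟩, h4.trans h5.symm⟩, h4⟩

/-- Inflating one equation to a partial Vinogradov system: with `𝒜 ⊆ {1,…,Q}`,
the number `J₁` of solutions of `m₁^k+…+m_s^k = n₁^k+…+n_s^k` in `𝒜` is at most
`s^{t−1} Q^{t(t−1)/2}` times the number `J₂` of solutions of the system where
additionally `m₁^j+…+m_s^j = n₁^j+…+n_s^j` for all `1 ≤ j ≤ t−1`. -/
theorem statement14 (k s t Q : ℕ) (hk : 0 < k) (hs : 0 < s) (ht : 0 < t) (hQ : 0 < Q)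
    (𝒜 : Finset ℕ) (h𝒜 : 𝒜 ⊆ Finset.Icc 1 Q) :
    Nat.card {p : (Fin s → ℕ) × (Fin s → ℕ) //
        (∀ i, p.1 i ∈ 𝒜) ∧ (∀ i, p.2 i ∈ 𝒜) ∧
        ∑ i, p.1 i ^ k = ∑ i, p.2 i ^ k} ≤
      s ^ (t - 1) * Q ^ (t * (t - 1) / 2) *
        Nat.card {p : (Fin s → ℕ) × (Fin s → ℕ) //
          (∀ i, p.1 i ∈ 𝒜) ∧ (∀ i, p.2 i ∈ 𝒜) ∧
          (∀ j : ℕ, 1 ≤ j → j ≤ t - 1 → ∑ i, p.1 i ^ j = ∑ i, p.2 i ^ j) ∧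
          ∑ i, p.1 i ^ k = ∑ i, p.2 i ^ k} := by
  classical
  set T : Finset (Fin s → ℕ) := Fintype.piFinset (fun _ => 𝒜) with hT
  set f : (Fin s → ℕ) → ℕ := fun m => ∑ i, m i ^ k with hf
  set g₂ : (Fin s → ℕ) → (Fin (t-1) → ℕ) := fun m j => ∑ i, m i ^ (j.1+1) with hg₂
  set g : (Fin s → ℕ) → ℕ × (Fin (t-1) → ℕ) := fun m => (f m, g₂ m) with hg
  -- identify J₁ with a Finset card
  have hJ1 : Nat.card {p : (Fin s → ℕ) × (Fin s → ℕ) //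
        (∀ i, p.1 i ∈ 𝒜) ∧ (∀ i, p.2 i ∈ 𝒜) ∧
        ∑ i, p.1 i ^ k = ∑ i, p.2 i ^ k}
      = ((T ×ˢ T).filter fun p => f p.1 = f p.2).card := by
    rw [← Nat.card_eq_finsetCard]
    refine Nat.card_congr (Equiv.subtypeEquivRight fun p => ?_)
    simp only [mem_filter, mem_product, hT, Fintype.mem_piFinset, hf]
    tauto
  -- identify J₂ with a Finset card
  have hJ2 : Nat.card {p : (Fin s → ℕ) × (Fin s → ℕ) //
        (∀ i, p.1 i ∈ 𝒜) ∧ (∀ i, p.2 i ∈ 𝒜) ∧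
        (∀ j : ℕ, 1 ≤ j → j ≤ t - 1 → ∑ i, p.1 i ^ j = ∑ i, p.2 i ^ j) ∧
        ∑ i, p.1 i ^ k = ∑ i, p.2 i ^ k}
      = ((T ×ˢ T).filter fun p => g p.1 = g p.2).card := by
    rw [← Nat.card_eq_finsetCard]
    refine Nat.card_congr (Equiv.subtypeEquivRight fun p => ?_)
    simp only [mem_filter, mem_product, hT, Fintype.mem_piFinset, hg, hf, hg₂, Prod.ext_iff,
      funext_iff]
    constructor
    · rintro ⟨h1, h2, h3, h4⟩
      refine ⟨⟨h1, h2⟩, h4, fun j => h3 (j.1+1) (by omega) (by omega)⟩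
    · rintro ⟨⟨h1, h2⟩, h4, h3⟩
      refine ⟨h1, h2, fun j hj1 hj2 => ?_, h4⟩
      have := h3 ⟨j - 1, by omega⟩
      simpa [Nat.sub_add_cancel hj1] using this
  rw [hJ1, hJ2, pair_count14, pair_count14]
  set C : Finset (Fin (t-1) → ℕ) := T.image g₂ with hC
  -- fiber decomposition
  have hfib : ∀ v : ℕ, (T.filter fun m => f m = v).card
      = ∑ c ∈ C, (T.filter fun m => g m = (v, c)).card := by
    intro v
    rw [card_eq_sum_card_fiberwise (f := g₂) (t := C)
      (fun m hm => mem_image_of_mem g₂ (mem_filter.mp hm).1)]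
    refine sum_congr rfl fun c hc => ?_
    rw [filter_filter]
    congr 1
    ext m
    simp [hg, Prod.ext_iff]
  -- Cauchy–Schwarz step
  have key : ∑ v ∈ T.image f, (T.filter fun m => f m = v).card ^ 2
      ≤ C.card * ∑ w ∈ T.image g, (T.filter fun m => g m = w).card ^ 2 := by
    calc ∑ v ∈ T.image f, (T.filter fun m => f m = v).card ^ 2
        = ∑ v ∈ T.image f, (∑ c ∈ C, (T.filter fun m => g m = (v, c)).card) ^ 2 := by
          refine sum_congr rfl fun v _ => ?_; rw [hfib]
      _ ≤ ∑ v ∈ T.image f, C.card * ∑ c ∈ C, (T.filter fun m => g m = (v, c)).card ^ 2 := by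
          refine sum_le_sum fun v _ => ?_
          exact sq_sum_le_card_mul_sum_sq
      _ = C.card * ∑ v ∈ T.image f, ∑ c ∈ C, (T.filter fun m => g m = (v, c)).card ^ 2 := by
          rw [mul_sum]
      _ = C.card * ∑ w ∈ (T.image f) ×ˢ C, (T.filter fun m => g m = w).card ^ 2 := by
          rw [sum_product]
      _ = C.card * ∑ w ∈ T.image g, (T.filter fun m => g m = w).card ^ 2 := by
          congr 1
          refine (sum_subset ?_ ?_).symm
          · intro w hw
            obtain ⟨m, hm, rfl⟩ := mem_image.mp hw
            exact mem_product.mpr ⟨mem_image_of_mem f hm, mem_image_of_mem g₂ hm⟩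
          · intro w _ hw
            have : (T.filter fun m => g m = w) = ∅ := by
              rw [filter_eq_empty_iff]
              intro m hm hgm
              exact hw (mem_image.mpr ⟨m, hm, hgm⟩)
            simp [this]
  refine key.trans (Nat.mul_le_mul_right _ ?_)
  -- bound on the number of possible lower power-sum vectors
  have hCsub : C ⊆ Fintype.piFinset (fun j : Fin (t-1) => Finset.Icc s (s * Q ^ (j.1+1))) := by
    intro c hc
    obtain ⟨m, hm, rfl⟩ := mem_image.mp hc
    rw [Fintype.mem_piFinset] at hm ⊢
    intro j
    rw [mem_Icc]
    constructor
    · calc s = ∑ _i : Fin s, 1 := by simp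
        _ ≤ ∑ i, m i ^ (j.1+1) := by
            refine sum_le_sum fun i _ => ?_
            exact Nat.one_le_pow _ _ (by have := (mem_Icc.mp (h𝒜 (hm i))).1; omega)
    · calc ∑ i, m i ^ (j.1+1) ≤ ∑ _i : Fin s, Q ^ (j.1+1) := by
            refine sum_le_sum fun i _ => ?_
            exact Nat.pow_le_pow_left (mem_Icc.mp (h𝒜 (hm i))).2 _
        _ = s * Q ^ (j.1+1) := by simp [mul_comm]
  calc C.card ≤ (Fintype.piFinset (fun j : Fin (t-1) => Finset.Icc s (s * Q ^ (j.1+1)))).card :=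
        card_le_card hCsub
    _ = ∏ j : Fin (t-1), (s * Q ^ (j.1+1) + 1 - s) := by
        rw [Fintype.card_piFinset]
        exact Fintype.prod_congr _ _ fun j => Nat.card_Icc _ _
    _ ≤ ∏ j : Fin (t-1), s * Q ^ (j.1+1) := by
        refine prod_le_prod' fun j _ => ?_
        have h1 : s ≤ s * Q ^ (j.1+1) := Nat.le_mul_of_pos_right s (Nat.pow_pos hQ)
        omega
    _ = ∏ j ∈ Finset.range (t-1), s * Q ^ (j+1) := by
        rw [Fin.prod_univ_eq_prod_range (fun j => s * Q ^ (j+1))]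
    _ = s ^ (t-1) * Q ^ (t * (t-1) / 2) := by
        rw [prod_mul_distrib, prod_const, card_range, prod_pow_eq_pow_sum]
        congr 1
        have : ∑ j ∈ Finset.range (t-1), (j+1) = ∑ j ∈ Finset.range t, j := by
          conv_rhs => rw [show t = (t-1)+1 by omega, Finset.sum_range_succ']
          simp
        rw [this, Finset.sum_range_id]
end

section
/- Let k and s be positive integers. There exists a constant C > 0, depending only on k and s, such that the following holds: for every real x ≥ 1, every real δ with 0 < δ ≤ 1/(2x^k), and all coprime positive integers a₀, q₀ with x/2 < q₀ ≤ x, the number of integers q with s(x/2)^k < q ≤ s x^k for which there exists an integer b with |b| < s δ x^{2k} and a₀ q ≡ b (mod q₀^k), is at most C · (1 + x^{2k} δ). -/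
set_option maxHeartbeats 1000000


/-- Bound on `|ℬ*_{k,s}(x,δ,a₀,q₀)|`: the number of integers
`q ∈ (s(x/2)^k, sx^k]` admitting `b ∈ ℤ` with `|b| < sδx^{2k}` and
`a₀q ≡ b (mod q₀^k)` is `O_{k,s}(1 + x^{2k}δ)`. -/
theorem statement15 (k s : ℕ) (hk : 0 < k) (hs : 0 < s) :
    ∃ C : ℝ, 0 < C ∧
      ∀ (x δ : ℝ) (a₀ q₀ : ℕ), 1 ≤ x → 0 < δ → δ ≤ 1 / (2 * x ^ k) →
        0 < a₀ → 0 < q₀ → Nat.Coprime a₀ q₀ → x / 2 < (q₀ : ℝ) → (q₀ : ℝ) ≤ x →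
        (Nat.card {q : ℕ //
            (s : ℝ) * (x / 2) ^ k < (q : ℝ) ∧ (q : ℝ) ≤ (s : ℝ) * x ^ k ∧
            ∃ b : ℤ, |(b : ℝ)| < (s : ℝ) * δ * x ^ (2 * k) ∧
              (a₀ : ℤ) * (q : ℤ) ≡ b [ZMOD ((q₀ : ℤ) ^ k)]} : ℝ) ≤
          C * (1 + x ^ (2 * k) * δ) := by
  have hs1 : (1 : ℝ) ≤ (s : ℝ) := by exact_mod_cast hs
  refine ⟨2 * (s : ℝ) * ((s : ℝ) * 2 ^ k + 1), by positivity, ?_⟩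
  intro x δ a₀ q₀ hx hδ hδ2 ha₀ hq₀ hcop hlo hhi
  have hx0 : (0 : ℝ) < x := lt_of_lt_of_le one_pos hx
  set m : ℕ := q₀ ^ k with hm
  have hmpos : 0 < m := pow_pos hq₀ k
  set B : ℝ := (s : ℝ) * δ * x ^ (2 * k) with hBdef
  have hB0 : (0 : ℝ) < B := by positivity
  set N : ℕ := ⌈B⌉₊ with hNdef
  have hN0 : 0 < N := Nat.ceil_pos.mpr hB0
  set T : Finset ℕ := Finset.range N ∪ Finset.Ico (m - N) m with hT
  set F : Finset (ℕ × ℕ) := T ×ˢ Finset.range (s * 2 ^ k + 1) with hFdef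
  -- membership of the image
  have hmemF : ∀ q : ℕ, (s : ℝ) * (x / 2) ^ k < (q : ℝ) → (q : ℝ) ≤ (s : ℝ) * x ^ k →
      (∃ b : ℤ, |(b : ℝ)| < (s : ℝ) * δ * x ^ (2 * k) ∧
        (a₀ : ℤ) * (q : ℤ) ≡ b [ZMOD ((q₀ : ℤ) ^ k)]) →
      (a₀ * q % m, q / m) ∈ F := by
    rintro q hq1 hq2 ⟨b, hb, hmod⟩
    have habs : |(b : ℝ)| < B := hb
    set r : ℕ := a₀ * q % m with hr
    have hrm : r < m := Nat.mod_lt _ hmpos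
    have hcast : (r : ℤ) = b % ((m : ℕ) : ℤ) := by
      have h1 : ((a₀ : ℤ) * (q : ℤ)) % ((q₀ : ℤ) ^ k) = b % ((q₀ : ℤ) ^ k) := hmod
      rw [hr]; push_cast [hm]
      exact h1
    have hmZ : (0 : ℤ) < (m : ℤ) := by exact_mod_cast hmpos
    -- first coordinate in T
    have hT1 : r ∈ T := by
      have hdiv := Int.mul_ediv_add_emod b ((m : ℕ) : ℤ)
      rw [← hcast] at hdiv
      -- b = m * (b / m) + r
      rw [hT, Finset.mem_union, Finset.mem_range, Finset.mem_Ico]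
      rcases le_or_gt 0 b with hb0 | hb0
      · left
        have ht : 0 ≤ b / ((m : ℕ) : ℤ) := Int.ediv_nonneg hb0 (le_of_lt hmZ)
        have hrb : (r : ℤ) ≤ b := by nlinarith [mul_nonneg (le_of_lt hmZ) ht]
        have : (r : ℝ) < B := by
          have h2 : ((r : ℤ) : ℝ) ≤ ((b : ℤ) : ℝ) := by exact_mod_cast hrb
          have h3 : ((b : ℤ) : ℝ) ≤ |(b : ℝ)| := le_abs_self _
          push_cast at h2 ⊢
          linarith
        exact Nat.lt_ceil.mpr this
      · -- b < 0
        rcases Nat.eq_zero_or_pos r with hr0 | hr0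
        · left; omega
        · right
          have hrpos : (0 : ℤ) < (r : ℤ) := by exact_mod_cast hr0
          have ht : b / ((m : ℕ) : ℤ) ≤ -1 := by
            have := Int.ediv_neg_of_neg_of_pos hb0 hmZ
            omega
          have hmr : ((m : ℤ) - (r : ℤ)) ≤ -b := by nlinarith
          have hmrR : ((m - r : ℕ) : ℝ) < B := by
            have h2 : ((m - r : ℕ) : ℤ) = (m : ℤ) - (r : ℤ) := by
              push_cast [Nat.cast_sub (le_of_lt hrm)]; ring
            have h3 : (-(b : ℝ)) ≤ |(b : ℝ)| := neg_le_abs _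
            have h4 : ((m - r : ℕ) : ℝ) ≤ (-b : ℤ) := by
              rw [show ((m - r : ℕ) : ℝ) = (((m - r : ℕ) : ℤ) : ℝ) from by push_cast; ring]
              exact_mod_cast h2 ▸ hmr
            push_cast at h4
            linarith
          have h5 : m - r < N := Nat.lt_ceil.mpr hmrR
          omega
    -- second coordinate
    have hT2 : q / m < s * 2 ^ k + 1 := by
      have hxk : (x / 2) ^ k < (m : ℝ) := by
        have h6 : (x / 2) ^ k < (q₀ : ℝ) ^ k :=
          pow_lt_pow_left₀ hlo (by positivity) (Nat.pos_iff_ne_zero.mp hk)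
        have h7 : ((m : ℕ) : ℝ) = (q₀ : ℝ) ^ k := by push_cast [hm]; ring
        linarith [h7 ▸ h6]
      have hx2 : (x / 2) ^ k * 2 ^ k = x ^ k := by
        rw [div_pow, div_mul_cancel₀]; positivity
      have hqlt : (q : ℝ) < ((m * (s * 2 ^ k + 1) : ℕ) : ℝ) := by
        have h8 : (s : ℝ) * x ^ k = (s : ℝ) * 2 ^ k * (x / 2) ^ k := by
          rw [← hx2]; ring
        have h9 : (s : ℝ) * 2 ^ k * (x / 2) ^ k ≤ (s : ℝ) * 2 ^ k * (m : ℝ) :=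
          mul_le_mul_of_nonneg_left (le_of_lt hxk) (by positivity)
        have h10 : (1 : ℝ) ≤ (m : ℝ) := by exact_mod_cast hmpos
        push_cast
        nlinarith
      have hqn : q < m * (s * 2 ^ k + 1) := by exact_mod_cast hqlt
      exact (Nat.div_lt_iff_lt_mul hmpos).mpr (by rw [mul_comm]; exact hqn)
    rw [hFdef, Finset.mem_product, Finset.mem_range]
    exact ⟨hT1, hT2⟩
  -- injectivity
  have hinj : ∀ q₁ q₂ : ℕ, a₀ * q₁ % m = a₀ * q₂ % m → q₁ / m = q₂ / m → q₁ = q₂ := by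
    intro q₁ q₂ h1 h2
    have hco : Nat.gcd m a₀ = 1 := (hm ▸ (hcop.symm.pow_left k) : Nat.Coprime (q₀ ^ k) a₀)
    have h3 : q₁ ≡ q₂ [MOD m] := Nat.ModEq.cancel_left_of_coprime hco h1
    have h4 : q₁ % m = q₂ % m := h3
    calc q₁ = m * (q₁ / m) + q₁ % m := (Nat.div_add_mod q₁ m).symm
      _ = m * (q₂ / m) + q₂ % m := by rw [h2, h4]
      _ = q₂ := Nat.div_add_mod q₂ m
  -- cardinality bound via injection
  have hfin : Nat.card {q : ℕ //
      (s : ℝ) * (x / 2) ^ k < (q : ℝ) ∧ (q : ℝ) ≤ (s : ℝ) * x ^ k ∧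
      ∃ b : ℤ, |(b : ℝ)| < B ∧
        (a₀ : ℤ) * (q : ℤ) ≡ b [ZMOD ((q₀ : ℤ) ^ k)]} ≤ F.card := by
    rw [← Nat.card_eq_finsetCard]
    refine Nat.card_le_card_of_injective
      (fun q => (⟨(a₀ * q.1 % m, q.1 / m), hmemF q.1 q.2.1 q.2.2.1 q.2.2.2⟩ : F)) ?_
    intro q₁ q₂ h
    simp only [Subtype.mk.injEq, Prod.mk.injEq] at h
    exact Subtype.ext (hinj _ _ h.1 h.2)
  have hFcard : F.card ≤ 2 * N * (s * 2 ^ k + 1) := by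
    rw [hFdef, Finset.card_product, Finset.card_range]
    have hTc : T.card ≤ 2 * N := by
      calc T.card ≤ (Finset.range N).card + (Finset.Ico (m - N) m).card :=
            Finset.card_union_le _ _
        _ ≤ 2 * N := by rw [Finset.card_range, Nat.card_Ico]; omega
    exact Nat.mul_le_mul_right _ hTc
  have hle : (Nat.card {q : ℕ //
      (s : ℝ) * (x / 2) ^ k < (q : ℝ) ∧ (q : ℝ) ≤ (s : ℝ) * x ^ k ∧
      ∃ b : ℤ, |(b : ℝ)| < B ∧
        (a₀ : ℤ) * (q : ℤ) ≡ b [ZMOD ((q₀ : ℤ) ^ k)]} : ℝ)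
      ≤ ((2 * N * (s * 2 ^ k + 1) : ℕ) : ℝ) := by
    exact_mod_cast hfin.trans hFcard
  refine hle.trans ?_
  have hNB : (N : ℝ) < B + 1 := Nat.ceil_lt_add_one (le_of_lt hB0)
  have hδx : (0 : ℝ) ≤ x ^ (2 * k) * δ := by positivity
  have hBle : B + 1 ≤ (s : ℝ) * (1 + x ^ (2 * k) * δ) := by
    rw [hBdef]; nlinarith
  push_cast
  nlinarith [mul_pos (show (0:ℝ) < 2 from two_pos) hB0,
    mul_nonneg (mul_nonneg (by norm_num : (0:ℝ) ≤ 2) (le_of_lt hB0))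
      (show (0:ℝ) ≤ (s:ℝ) * 2 ^ k + 1 by positivity)]
end

section
/- Let k be a positive integer, x ≥ 1 a real number, and δ a real number with 0 < δ ≤ 1/(2x^k). Let a₀, q₀ be coprime positive integers with a₀ ≤ q₀^k and x/2 < q₀ ≤ x, and set α₀ = a₀/q₀^k. Define 𝒜_k(x) = {a/q^k : q, a positive integers with x/2 < q ≤ x, a ≤ q^k, gcd(a,q) = 1}, and define 𝒜*_k to be the set of positive integers q with x/2 < q ≤ x for which there exists an integer b with |b| < δ x^{2k} and a₀ q^k ≡ b (mod q₀^k). Then the map sending a reduced fraction a/q^k ∈ 𝒜_k(x) with |a/q^k − α₀| < δ to its denominator parameter q is a well-defined injection from {α ∈ 𝒜_k(x) : |α − α₀| < δ} into 𝒜*_k; in particular |{α ∈ 𝒜_k(x) : |α − α₀| < δ}| ≤ |𝒜*_k|. -/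
/-- `𝒜_k(x) = {a/q^k : x/2 < q ≤ x, 1 ≤ a ≤ q^k, gcd(a,q)=1}` as a set of reals. -/
def Aset (k : ℕ) (x : ℝ) : Set ℝ :=
  {α | ∃ q a : ℕ, 0 < q ∧ x / 2 < (q : ℝ) ∧ (q : ℝ) ≤ x ∧ 0 < a ∧ a ≤ q ^ k ∧
    Nat.Coprime a q ∧ α = (a : ℝ) / (q : ℝ) ^ k}

/-- `𝒜*_k(x,δ,a₀,q₀)`: integers `q ∈ (x/2, x]` for which there is `b ∈ ℤ` with
`|b| < δx^{2k}` and `a₀q^k ≡ b (mod q₀^k)`. -/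
def Astar (k : ℕ) (x δ : ℝ) (a₀ q₀ : ℕ) : Set ℕ :=
  {q | 0 < q ∧ x / 2 < (q : ℝ) ∧ (q : ℝ) ≤ x ∧
    ∃ b : ℤ, |(b : ℝ)| < δ * x ^ (2 * k) ∧
      (a₀ : ℤ) * (q : ℤ) ^ k ≡ b [ZMOD ((q₀ : ℤ) ^ k)]}

/-- Uniqueness of the reduced representation. -/
lemma repr_unique (k : ℕ) (hk : 0 < k) {q a q' a' : ℕ} (hq : 0 < q) (hq' : 0 < q')
    (hc : Nat.Coprime a q) (hc' : Nat.Coprime a' q')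
    (h : (a : ℝ) / (q : ℝ) ^ k = (a' : ℝ) / (q' : ℝ) ^ k) : q = q' ∧ a = a' := by
  have hqR : (0 : ℝ) < (q : ℝ) ^ k := by positivity
  have hq'R : (0 : ℝ) < (q' : ℝ) ^ k := by positivity
  have hR : (a : ℝ) * (q' : ℝ) ^ k = (a' : ℝ) * (q : ℝ) ^ k := by
    field_simp at h; linarith [h]
  have hN : a * q' ^ k = a' * q ^ k := by exact_mod_cast hR
  have h1 : q ^ k ∣ q' ^ k := by
    have hd : q ^ k ∣ a * q' ^ k := hN ▸ Dvd.intro_left a' rfl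
    exact Nat.Coprime.dvd_of_dvd_mul_left (hc.symm.pow_left k) hd
  have h2 : q' ^ k ∣ q ^ k := by
    have hd : q' ^ k ∣ a' * q ^ k := hN.symm ▸ Dvd.intro_left a rfl
    exact Nat.Coprime.dvd_of_dvd_mul_left (hc'.symm.pow_left k) hd
  have hqq : q = q' := Nat.pow_left_injective hk.ne' (Nat.dvd_antisymm h1 h2)
  subst hqq
  exact ⟨rfl, Nat.eq_of_mul_eq_mul_right (pow_pos hq k) hN⟩

/-- The map `a/q^k ↦ q` is a well-defined injection from
`{α ∈ 𝒜_k(x) : |α − α₀| < δ}` into `𝒜*_k(x,δ,a₀,q₀)`; in particular the first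
set has cardinality at most that of the second. -/
theorem statement16 (k : ℕ) (hk : 0 < k) (x δ : ℝ) (hx : 1 ≤ x) (hδ : 0 < δ)
    (hδx : δ ≤ 1 / (2 * x ^ k)) (a₀ q₀ : ℕ) (ha₀ : 0 < a₀) (hq₀ : 0 < q₀)
    (hcop : Nat.Coprime a₀ q₀) (ha₀le : a₀ ≤ q₀ ^ k)
    (hq₀lt : x / 2 < (q₀ : ℝ)) (hq₀le : (q₀ : ℝ) ≤ x) :
    (∃ f : ℝ → ℕ,
      (∀ α ∈ {α ∈ Aset k x | |α - (a₀ : ℝ) / (q₀ : ℝ) ^ k| < δ},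
        (∀ q a : ℕ, 0 < q → x / 2 < (q : ℝ) → (q : ℝ) ≤ x → 0 < a → a ≤ q ^ k →
          Nat.Coprime a q → α = (a : ℝ) / (q : ℝ) ^ k → f α = q) ∧
        f α ∈ Astar k x δ a₀ q₀) ∧
      Set.InjOn f {α ∈ Aset k x | |α - (a₀ : ℝ) / (q₀ : ℝ) ^ k| < δ}) ∧
    Set.ncard {α ∈ Aset k x | |α - (a₀ : ℝ) / (q₀ : ℝ) ^ k| < δ} ≤
      Set.ncard (Astar k x δ a₀ q₀) := by
  have hx0 : (0 : ℝ) < x := lt_of_lt_of_le one_pos hx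
  set f : ℝ → ℕ := fun α =>
    sInf {q : ℕ | ∃ a : ℕ, 0 < q ∧ x / 2 < (q : ℝ) ∧ (q : ℝ) ≤ x ∧ 0 < a ∧ a ≤ q ^ k ∧
      Nat.Coprime a q ∧ α = (a : ℝ) / (q : ℝ) ^ k} with hf
  set S := {α ∈ Aset k x | |α - (a₀ : ℝ) / (q₀ : ℝ) ^ k| < δ} with hS
  -- well-definedness of f
  have hwd : ∀ α : ℝ, ∀ q a : ℕ, 0 < q → x / 2 < (q : ℝ) → (q : ℝ) ≤ x → 0 < a → a ≤ q ^ k →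
      Nat.Coprime a q → α = (a : ℝ) / (q : ℝ) ^ k → f α = q := by
    intro α q a h1 h2 h3 h4 h5 h6 h7
    have hset : {q' : ℕ | ∃ a' : ℕ, 0 < q' ∧ x / 2 < (q' : ℝ) ∧ (q' : ℝ) ≤ x ∧ 0 < a' ∧
        a' ≤ q' ^ k ∧ Nat.Coprime a' q' ∧ α = (a' : ℝ) / (q' : ℝ) ^ k} = {q} := by
      ext q'
      simp only [Set.mem_setOf_eq, Set.mem_singleton_iff]
      constructor
      · rintro ⟨a', g1, g2, g3, g4, g5, g6, g7⟩
        exact (repr_unique k hk g1 h1 g6 h6 (g7 ▸ h7 ▸ rfl)).1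
      · rintro rfl; exact ⟨a, h1, h2, h3, h4, h5, h6, h7⟩
    simp only [hf]
    rw [hset, csInf_singleton]
  -- the image lies in Astar
  have hmem : ∀ α ∈ S, f α ∈ Astar k x δ a₀ q₀ := by
    rintro α ⟨⟨q, a, h1, h2, h3, h4, h5, h6, h7⟩, hclose⟩
    have hfq : f α = q := hwd α q a h1 h2 h3 h4 h5 h6 h7
    rw [hfq]
    refine ⟨h1, h2, h3, (a₀ : ℤ) * (q : ℤ) ^ k - (a : ℤ) * (q₀ : ℤ) ^ k, ?_, ?_⟩
    · have key : |α - (a₀ : ℝ) / (q₀ : ℝ) ^ k| * ((q : ℝ) ^ k * (q₀ : ℝ) ^ k)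
          < δ * ((q : ℝ) ^ k * (q₀ : ℝ) ^ k) :=
        mul_lt_mul_of_pos_right hclose (by positivity)
      have heq : |α - (a₀ : ℝ) / (q₀ : ℝ) ^ k| * ((q : ℝ) ^ k * (q₀ : ℝ) ^ k)
          = |((a₀ : ℝ) * (q : ℝ) ^ k - (a : ℝ) * (q₀ : ℝ) ^ k)| := by
        rw [← abs_of_pos (show (0:ℝ) < (q : ℝ) ^ k * (q₀ : ℝ) ^ k by positivity), ← abs_mul,
          ← abs_neg]
        congr 1
        rw [h7]
        have hq0 : ((q : ℝ)) ^ k ≠ 0 := by positivity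
        have hq₀0 : ((q₀ : ℝ)) ^ k ≠ 0 := by positivity
        field_simp
        ring
      have hbd : δ * ((q : ℝ) ^ k * (q₀ : ℝ) ^ k) ≤ δ * x ^ (2 * k) := by
        have hb1 : (q : ℝ) ^ k ≤ x ^ k := pow_le_pow_left₀ (by positivity) h3 k
        have hb2 : (q₀ : ℝ) ^ k ≤ x ^ k := pow_le_pow_left₀ (by positivity) hq₀le k
        have hb3 : (q : ℝ) ^ k * (q₀ : ℝ) ^ k ≤ x ^ k * x ^ k :=
          mul_le_mul hb1 hb2 (by positivity) (by positivity)
        rw [two_mul, pow_add]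
        nlinarith
      calc |((((a₀ : ℤ) * (q : ℤ) ^ k - (a : ℤ) * (q₀ : ℤ) ^ k) : ℤ) : ℝ)|
          = |((a₀ : ℝ) * (q : ℝ) ^ k - (a : ℝ) * (q₀ : ℝ) ^ k)| := by push_cast; ring_nf
        _ = |α - (a₀ : ℝ) / (q₀ : ℝ) ^ k| * ((q : ℝ) ^ k * (q₀ : ℝ) ^ k) := heq.symm
        _ < δ * ((q : ℝ) ^ k * (q₀ : ℝ) ^ k) := key
        _ ≤ δ * x ^ (2 * k) := hbd
    · exact Int.modEq_iff_dvd.mpr ⟨-(a : ℤ), by ring⟩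
  -- injectivity
  have hinj : Set.InjOn f S := by
    rintro α ⟨⟨q, a, h1, h2, h3, h4, h5, h6, h7⟩, hcα⟩
      β ⟨⟨q', a', g1, g2, g3, g4, g5, g6, g7⟩, hcβ⟩ hfab
    have hfα : f α = q := hwd α q a h1 h2 h3 h4 h5 h6 h7
    have hfβ : f β = q' := hwd β q' a' g1 g2 g3 g4 g5 g6 g7
    have hqq : q = q' := by rw [← hfα, ← hfβ, hfab]
    subst hqq
    have hxk : (0 : ℝ) < x ^ k := by positivity
    have hqk : (0 : ℝ) < (q : ℝ) ^ k := by positivity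
    have hab : |α - β| < 2 * δ := by
      calc |α - β| = |(α - (a₀ : ℝ) / (q₀ : ℝ) ^ k) - (β - (a₀ : ℝ) / (q₀ : ℝ) ^ k)| := by
            ring_nf
        _ ≤ |α - (a₀ : ℝ) / (q₀ : ℝ) ^ k| + |β - (a₀ : ℝ) / (q₀ : ℝ) ^ k| := abs_sub _ _
        _ < 2 * δ := by linarith
    have h2δ : 2 * δ ≤ 1 / x ^ k := by
      rw [le_div_iff₀ hxk]
      have : δ * (2 * x ^ k) ≤ 1 := by
        rw [← le_div_iff₀ (by positivity)] ; exact hδx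
      nlinarith
    have hqx : (q : ℝ) ^ k ≤ x ^ k := pow_le_pow_left₀ (by positivity) h3 k
    have hdiff : |((a : ℝ) - (a' : ℝ))| < 1 := by
      have hab2 : |α - β| < 1 / (q : ℝ) ^ k := by
        have : 1 / x ^ k ≤ 1 / (q : ℝ) ^ k := by
          apply one_div_le_one_div_of_le hqk hqx
        linarith
      have heq : α - β = ((a : ℝ) - (a' : ℝ)) / (q : ℝ) ^ k := by
        rw [h7, g7]; ring
      rw [heq, abs_div, abs_of_pos hqk, div_lt_div_iff₀ hqk hqk, one_mul] at hab2
      have h1m : |((a : ℝ) - (a' : ℝ))| * (q : ℝ) ^ k < 1 * (q : ℝ) ^ k := by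
        rw [one_mul]; exact hab2
      exact lt_of_mul_lt_mul_right h1m hqk.le
    have haa : a = a' := by
      have hz : ((a : ℤ) - (a' : ℤ)) = 0 := by
        have : |(((a : ℤ) - (a' : ℤ) : ℤ) : ℝ)| < 1 := by push_cast; exact hdiff
        have h2 : |((a : ℤ) - (a' : ℤ))| < 1 := by exact_mod_cast this
        exact Int.abs_lt_one_iff.mp h2
      omega
    rw [h7, g7, haa]
  -- finiteness of Astar
  have hfin : (Astar k x δ a₀ q₀).Finite := by
    apply Set.Finite.subset (Set.finite_Iic (Nat.floor x))
    rintro q ⟨_, _, hqx, _⟩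
    exact Set.mem_Iic.mpr (Nat.le_floor hqx)
  refine ⟨⟨f, fun α hα => ⟨hwd α, hmem α hα⟩, hinj⟩, ?_⟩
  exact Set.ncard_le_ncard_of_injOn f hmem hinj hfin
end
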